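/- arXiv:1411.5237 — 5 statements merged into one kernel-verified Lean document; each statement's English description precedes it below -/
import Mathlib

section
/- Let G : V → L₂(V, V̂) be three times Fréchet differentiable with ‖D²G‖ ≤ c_{D²G} and ‖D³G‖ ≤ c_{D³G}. Then for all u₁, u₂, v₁, v₂ ∈ V: ‖G(u₁)-G(u₂)-DG(u₂)(u₁-u₂) - (G(v₁)-G(v₂)-DG(v₂)(v₁-v₂))‖_{L₂(V,V̂)} ≤ c_{D²G}(|u₁-u₂|+|v₁-v₂|)·|u₁-v₁-(u₂-v₂)| + c_{D³G}|v₁-v₂|·|u₂-v₂|·(|u₁-u₂| + |u₁-v₁-(u₂-v₂)|). -/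
set_option maxSynthPendingDepth 3

open Set

-- Lipschitz bound from derivative bound, on univ
lemma lip_of_deriv {V W : Type*} [NormedAddCommGroup V] [NormedSpace ℝ V]
    [NormedAddCommGroup W] [NormedSpace ℝ W]
    (f : V → W) (f' : V → V →L[ℝ] W) (C : ℝ)
    (hf : ∀ u, HasFDerivAt f (f' u) u) (hb : ∀ u, ‖f' u‖ ≤ C) (x y : V) :
    ‖f y - f x‖ ≤ C * ‖y - x‖ :=
  convex_univ.norm_image_sub_le_of_norm_hasFDerivWithin_le
    (fun u _ => (hf u).hasFDerivWithinAt) (fun u _ => hb u) (mem_univ x) (mem_univ y)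


/-- If G is three times Fréchet differentiable with ‖D²G‖ ≤ c_{D²G} and ‖D³G‖ ≤ c_{D³G}, then
‖G(u₁)-G(u₂)-DG(u₂)(u₁-u₂) - (G(v₁)-G(v₂)-DG(v₂)(v₁-v₂))‖
  ≤ c_{D²G}(|u₁-u₂|+|v₁-v₂|)|u₁-v₁-(u₂-v₂)|
    + c_{D³G}|v₁-v₂||u₂-v₂|(|u₁-u₂| + |u₁-v₁-(u₂-v₂)|). -/
theorem stmt_5 {V W : Type*} [NormedAddCommGroup V] [InnerProductSpace ℝ V] [CompleteSpace V]
    [NormedAddCommGroup W] [NormedSpace ℝ W]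
    (G : V → W) (DG : V → V →L[ℝ] W) (D2G : V → V →L[ℝ] V →L[ℝ] W)
    (D3G : V → V →L[ℝ] V →L[ℝ] V →L[ℝ] W) (cD2G cD3G : ℝ)
    (hG : ∀ u, HasFDerivAt G (DG u) u) (hDG : ∀ u, HasFDerivAt DG (D2G u) u)
    (hD2G : ∀ u, HasFDerivAt D2G (D3G u) u)
    (hD2Gb : ∀ u, ‖D2G u‖ ≤ cD2G) (hD3Gb : ∀ u, ‖D3G u‖ ≤ cD3G)
    (u₁ u₂ v₁ v₂ : V) :
    ‖G u₁ - G u₂ - DG u₂ (u₁ - u₂) - (G v₁ - G v₂ - DG v₂ (v₁ - v₂))‖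
      ≤ cD2G * (‖u₁ - u₂‖ + ‖v₁ - v₂‖) * ‖u₁ - v₁ - (u₂ - v₂)‖
        + cD3G * ‖v₁ - v₂‖ * ‖u₂ - v₂‖ * (‖u₁ - u₂‖ + ‖u₁ - v₁ - (u₂ - v₂)‖) := by
  have hc2 : 0 ≤ cD2G := le_trans (norm_nonneg _) (hD2Gb u₁)
  have hc3 : 0 ≤ cD3G := le_trans (norm_nonneg _) (hD3Gb u₁)
  set k : V := v₁ - v₂ with hk
  set d : V := u₁ - v₁ - (u₂ - v₂) with hd
  -- Lipschitz bounds
  have lipDG : ∀ x y : V, ‖DG y - DG x‖ ≤ cD2G * ‖y - x‖ :=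
    lip_of_deriv DG D2G cD2G hDG hD2Gb
  have lipD2G : ∀ x y : V, ‖D2G y - D2G x‖ ≤ cD3G * ‖y - x‖ :=
    lip_of_deriv D2G D3G cD3G hD2G hD3Gb
  -- Term 1 : ‖G u₁ - G (u₂ + k) - DG u₂ d‖ ≤ cD2G * (‖u₁-u₂‖+‖k‖) * ‖d‖
  set r : ℝ := ‖u₁ - u₂‖ + ‖k‖ with hr
  have term1 : ‖G u₁ - G (u₂ + k) - DG u₂ d‖ ≤ cD2G * r * ‖d‖ := by
    have key : ‖(G u₁ - DG u₂ u₁) - (G (u₂ + k) - DG u₂ (u₂ + k))‖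
        ≤ (cD2G * r) * ‖u₁ - (u₂ + k)‖ := by
      apply (convex_closedBall u₂ r).norm_image_sub_le_of_norm_hasFDerivWithin_le
        (f := fun x => G x - DG u₂ x) (f' := fun x => DG x - DG u₂)
      · intro x _
        exact ((hG x).sub (DG u₂).hasFDerivAt).hasFDerivWithinAt
      · intro x hx
        calc ‖DG x - DG u₂‖ ≤ cD2G * ‖x - u₂‖ := lipDG u₂ x
          _ ≤ cD2G * r := by
              apply mul_le_mul_of_nonneg_left _ hc2
              simpa [Metric.mem_closedBall, dist_eq_norm] using hx
      · rw [Metric.mem_closedBall, dist_eq_norm]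
        have e : u₂ + k - u₂ = k := by abel
        rw [e, hr]
        linarith [norm_nonneg (u₁ - u₂)]
      · rw [Metric.mem_closedBall, dist_eq_norm, hr]
        linarith [norm_nonneg k]
    have e1 : u₁ - (u₂ + k) = d := by rw [hk, hd]; abel
    have e2 : (G u₁ - DG u₂ u₁) - (G (u₂ + k) - DG u₂ (u₂ + k))
        = G u₁ - G (u₂ + k) - DG u₂ d := by
      rw [← e1, map_sub]; abel
    rw [e2, e1] at key
    exact key
  -- Term 2: ‖g u₂ - g v₂‖ ≤ cD3G * ‖k‖^2 * ‖u₂ - v₂‖ where g x = G (x+k) - G x - DG x k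
  have term2 : ‖(G (u₂ + k) - G u₂ - DG u₂ k) - (G (v₂ + k) - G v₂ - DG v₂ k)‖
      ≤ (cD3G * ‖k‖ * ‖k‖) * ‖u₂ - v₂‖ := by
    have := lip_of_deriv (fun x => G (x + k) - G x - DG x k)
      (fun x => DG (x + k) - DG x - (D2G x).flip k) (cD3G * ‖k‖ * ‖k‖)
      ?_ ?_ v₂ u₂
    · simpa using this
    · intro x
      have h1 : HasFDerivAt (fun x : V => G (x + k)) (DG (x + k)) x := by
        have := (hG (x + k)).comp x ((hasFDerivAt_id x).add_const k)
        simpa [Function.comp_def] using this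
      have h2 : HasFDerivAt (fun x : V => DG x k) ((D2G x).flip k) x := by
        have := (hDG x).clm_apply (hasFDerivAt_const k x)
        simpa using this
      exact (h1.sub (hG x)).sub h2
    · intro x
      -- symmetry: (D2G x).flip k = D2G x k
      have hsymm : (D2G x).flip k = D2G x k := by
        ext w
        exact second_derivative_symmetric hG (hDG x) w k
      show ‖DG (x + k) - DG x - (D2G x).flip k‖ ≤ cD3G * ‖k‖ * ‖k‖
      rw [hsymm]
      -- Taylor bound: ‖DG (x+k) - DG x - D2G x k‖ ≤ cD3G ‖k‖ ‖k‖
      have key : ‖(DG (x + k) - D2G x (x + k)) - (DG x - D2G x x)‖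
          ≤ (cD3G * ‖k‖) * ‖(x + k) - x‖ := by
        apply (convex_closedBall x ‖k‖).norm_image_sub_le_of_norm_hasFDerivWithin_le
          (f := fun y => DG y - D2G x y) (f' := fun y => D2G y - D2G x)
        · intro y _
          exact ((hDG y).sub (D2G x).hasFDerivAt).hasFDerivWithinAt
        · intro y hy
          calc ‖D2G y - D2G x‖ ≤ cD3G * ‖y - x‖ := lipD2G x y
            _ ≤ cD3G * ‖k‖ := by
                apply mul_le_mul_of_nonneg_left _ hc3
                simpa [Metric.mem_closedBall, dist_eq_norm] using hy
        · simp [Metric.mem_closedBall]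
        · simp [Metric.mem_closedBall, dist_eq_norm]
      have e1 : (x + k) - x = k := by abel
      have e2 : (DG (x + k) - D2G x (x + k)) - (DG x - D2G x x)
          = DG (x + k) - DG x - D2G x k := by rw [← e1, map_sub]; abel
      rw [e2, e1] at key
      linarith [key]
  -- assemble
  have split : G u₁ - G u₂ - DG u₂ (u₁ - u₂) - (G v₁ - G v₂ - DG v₂ (v₁ - v₂))
      = (G u₁ - G (u₂ + k) - DG u₂ d)
        + ((G (u₂ + k) - G u₂ - DG u₂ k) - (G (v₂ + k) - G v₂ - DG v₂ k)) := by
    have hdd : u₁ - u₂ = d + k := by rw [hd, hk]; abel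
    have hvk : v₂ + k = v₁ := by rw [hk]; abel
    rw [hdd, map_add, hvk]
    abel
  rw [split]
  have hkle : ‖k‖ ≤ ‖u₁ - u₂‖ + ‖d‖ := by
    have : k = (u₁ - u₂) - d := by rw [hk, hd]; abel
    rw [this]
    exact norm_sub_le _ _
  calc ‖(G u₁ - G (u₂ + k) - DG u₂ d)
        + ((G (u₂ + k) - G u₂ - DG u₂ k) - (G (v₂ + k) - G v₂ - DG v₂ k))‖
      ≤ ‖G u₁ - G (u₂ + k) - DG u₂ d‖
        + ‖(G (u₂ + k) - G u₂ - DG u₂ k) - (G (v₂ + k) - G v₂ - DG v₂ k)‖ := norm_add_le _ _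
    _ ≤ cD2G * r * ‖d‖ + (cD3G * ‖k‖ * ‖k‖) * ‖u₂ - v₂‖ := add_le_add term1 term2
    _ ≤ cD2G * (‖u₁ - u₂‖ + ‖v₁ - v₂‖) * ‖u₁ - v₁ - (u₂ - v₂)‖
        + cD3G * ‖v₁ - v₂‖ * ‖u₂ - v₂‖ * (‖u₁ - u₂‖ + ‖u₁ - v₁ - (u₂ - v₂)‖) := by
        rw [hr, ← hk, ← hd]
        have : cD3G * ‖k‖ * ‖k‖ * ‖u₂ - v₂‖ ≤ cD3G * ‖k‖ * ‖u₂ - v₂‖ * (‖u₁ - u₂‖ + ‖d‖) := by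
          calc cD3G * ‖k‖ * ‖k‖ * ‖u₂ - v₂‖ ≤ cD3G * ‖k‖ * (‖u₁ - u₂‖ + ‖d‖) * ‖u₂ - v₂‖ := by
                apply mul_le_mul_of_nonneg_right _ (norm_nonneg _)
                apply mul_le_mul_of_nonneg_left hkle (by positivity)
            _ = cD3G * ‖k‖ * ‖u₂ - v₂‖ * (‖u₁ - u₂‖ + ‖d‖) := by ring
        linarith
end

section
/- Let V, V̂ be separable Hilbert spaces such that the embedding V̂ ⊂ V is Hilbert–Schmidt with norm c_{V,V̂}. Fix u ∈ V. Then the linear map Φ : L₂(V, V̂) → V defined by Φ(E) = E u (composing E with the embedding into V) is Hilbert–Schmidt, with ‖Φ‖_{HS} ≤ c_{V,V̂} |u|. -/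
set_option maxHeartbeats 1000000 in
/-- Let V, V̂ be separable Hilbert spaces with orthonormal bases (eⱼ), (fᵢ), and let the embedding
J : V̂ → V be Hilbert–Schmidt with HS norm c, i.e. Σᵢ ‖J fᵢ‖² = c². Fix u ∈ V. Then the map
Φ : L₂(V,V̂) → V, E ↦ J(E u), is Hilbert–Schmidt with ‖Φ‖_HS ≤ c|u|: evaluating Φ on the
orthonormal basis E_{ij} = ⟪eⱼ,·⟫ fᵢ of L₂(V,V̂), the squares sum to at most (c|u|)². -/
theorem stmt_12 {V Vh : Type*} [NormedAddCommGroup V] [InnerProductSpace ℝ V] [CompleteSpace V]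
    [NormedAddCommGroup Vh] [InnerProductSpace ℝ Vh] [CompleteSpace Vh]
    (e : HilbertBasis ℕ ℝ V) (f : HilbertBasis ℕ ℝ Vh)
    (J : Vh →L[ℝ] V) (c : ℝ) (hc0 : 0 ≤ c) (hJ : ∑' i, ‖J (f i)‖ ^ 2 = c ^ 2)
    (u : V) :
    ∑' p : ℕ × ℕ, ‖J (((innerSL ℝ (e p.2)).smulRight (f p.1)) u)‖ ^ 2 ≤ (c * ‖u‖) ^ 2 := by
  have hrw : ∀ p : ℕ × ℕ, ‖J (((innerSL ℝ (e p.2)).smulRight (f p.1)) u)‖ ^ 2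
      = ‖J (f p.1)‖ ^ 2 * (inner ℝ (e p.2) u : ℝ) ^ 2 := by
    intro p
    rw [ContinuousLinearMap.smulRight_apply, innerSL_apply_apply, map_smul, norm_smul, mul_pow,
      Real.norm_eq_abs, sq_abs, mul_comm]
  rw [tsum_congr hrw]
  have husum : Summable fun j => (inner ℝ (e j) u : ℝ) ^ 2 := by
    have := e.summable_inner_mul_inner u u
    refine this.congr fun j => ?_
    rw [real_inner_comm u (e j), sq]
  have hu : ∑' j, (inner ℝ (e j) u : ℝ) ^ 2 = ‖u‖ ^ 2 := by
    have := e.tsum_inner_mul_inner u u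
    rw [real_inner_self_eq_norm_sq] at this
    rw [← this]
    exact tsum_congr fun j => by rw [real_inner_comm u (e j), sq]
  by_cases hsum : Summable fun i => ‖J (f i)‖ ^ 2
  · have hprod : Summable fun p : ℕ × ℕ => ‖J (f p.1)‖ ^ 2 * (inner ℝ (e p.2) u : ℝ) ^ 2 :=
      hsum.mul_of_nonneg husum (fun i => by positivity) (fun j => by positivity)
    rw [Summable.tsum_prod hprod]
    refine le_of_eq ?_
    calc ∑' i, ∑' j, ‖J (f i)‖ ^ 2 * (inner ℝ (e j) u : ℝ) ^ 2
        = ∑' i, ‖J (f i)‖ ^ 2 * ‖u‖ ^ 2 := by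
          refine tsum_congr fun i => ?_
          rw [tsum_mul_left, hu]
      _ = c ^ 2 * ‖u‖ ^ 2 := by rw [tsum_mul_right, hJ]
      _ = (c * ‖u‖) ^ 2 := by ring
  · by_cases hu0 : u = 0
    · subst hu0
      simp [mul_nonneg, sq_nonneg]
    · have hprod : ¬ Summable fun p : ℕ × ℕ => ‖J (f p.1)‖ ^ 2 * (inner ℝ (e p.2) u : ℝ) ^ 2 := by
        intro h
        obtain ⟨j, hj⟩ : ∃ j, (inner ℝ (e j) u : ℝ) ≠ 0 := by
          by_contra hall
          push_neg at hall
          apply hu0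
          have : ‖u‖ ^ 2 = 0 := by rw [← hu]; simp [hall]
          simpa using (pow_eq_zero_iff (by norm_num)).mp this |> norm_eq_zero.mp
        have := h.prod_symm.prod_factor j
        apply hsum
        have hj2 : (inner ℝ (e j) u : ℝ) ^ 2 ≠ 0 := pow_ne_zero _ hj
        have := this.div_const ((inner ℝ (e j) u : ℝ) ^ 2)
        refine this.congr fun i => ?_
        field_simp
        simp only [Prod.swap_prod_mk]
        ring
      rw [tsum_eq_zero_of_not_summable hprod]
      positivity
end

section
/- Let V, V̂ be separable Hilbert spaces such that the embedding V̂ ⊂ V is Hilbert–Schmidt with norm c_{V,V̂}, and let v ∈ V ⊗ V be fixed (V ⊗ V the Hilbert space tensor product). Then the map L₂(V ⊗ V, V̂) → V, Ẽ ↦ Ẽv, is Hilbert–Schmidt with norm at most c_{V,V̂} ‖v‖. -/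
/-- Let V, V̂ be separable Hilbert spaces with the embedding J : V̂ → V Hilbert–Schmidt of HS
norm c, and let W (representing the Hilbert tensor product V ⊗ V) be a Hilbert space with
orthonormal basis (g_{jk})_{(j,k)∈ℕ×ℕ}. Fix v ∈ W. Then the map L₂(W,V̂) → V, Ẽ ↦ J(Ẽ v),
is Hilbert–Schmidt with norm at most c‖v‖: evaluated on the orthonormal basis
Ẽ_{i,(j,k)} = ⟪g_{jk},·⟫ fᵢ of L₂(W,V̂), the squares sum to at most (c‖v‖)². -/
theorem stmt_13 {V Vh W : Type*} [NormedAddCommGroup V] [InnerProductSpace ℝ V] [CompleteSpace V]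
    [NormedAddCommGroup Vh] [InnerProductSpace ℝ Vh] [CompleteSpace Vh]
    [NormedAddCommGroup W] [InnerProductSpace ℝ W] [CompleteSpace W]
    (f : HilbertBasis ℕ ℝ Vh) (g : HilbertBasis (ℕ × ℕ) ℝ W)
    (J : Vh →L[ℝ] V) (c : ℝ) (hc0 : 0 ≤ c) (hJ : ∑' i, ‖J (f i)‖ ^ 2 = c ^ 2)
    (v : W) :
    ∑' p : ℕ × (ℕ × ℕ), ‖J (((innerSL ℝ (g p.2)).smulRight (f p.1)) v)‖ ^ 2
      ≤ (c * ‖v‖) ^ 2 := by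
  set x : ℕ × ℕ → ℝ := fun q => (inner ℝ (g q) v : ℝ) ^ 2 with hx
  set y : ℕ → ℝ := fun i => ‖J (f i)‖ ^ 2 with hy
  have key : ∀ p : ℕ × (ℕ × ℕ),
      ‖J (((innerSL ℝ (g p.2)).smulRight (f p.1)) v)‖ ^ 2 = x p.2 * y p.1 := by
    intro p
    simp only [ContinuousLinearMap.smulRight_apply, innerSL_apply_apply, map_smul, norm_smul,
      Real.norm_eq_abs, mul_pow, sq_abs, hx, hy]
  rw [tsum_congr key]
  -- Parseval for x
  have hxsum : Summable x := by
    have := (g.summable_inner_mul_inner v v)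
    simpa [hx, real_inner_comm, sq] using this
  have hxval : ∑' q, x q = ‖v‖ ^ 2 := by
    have h := g.tsum_inner_mul_inner v v
    rw [real_inner_self_eq_norm_sq] at h
    rw [← h]
    exact tsum_congr fun q => by simp only [hx, sq]; rw [real_inner_comm (g q) v]
  have hynn : ∀ i, 0 ≤ y i := fun i => sq_nonneg _
  have hxnn : ∀ q, 0 ≤ x q := fun q => sq_nonneg _
  by_cases hysum : Summable y
  · have hfam : Summable (fun p : ℕ × (ℕ × ℕ) => x p.2 * y p.1) := by
      have := hxsum.mul_of_nonneg hysum hxnn hynn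
      exact (this.comp_injective (Prod.swap_injective)).congr (fun p => rfl)
    have : ∑' p : ℕ × (ℕ × ℕ), x p.2 * y p.1 = (∑' i, y i) * (∑' q, x q) := by
      rw [Summable.tsum_prod' hfam (fun i => hxsum.mul_left (y i) |>.congr fun q => by ring)]
      simp_rw [tsum_mul_right, tsum_mul_left]
      exact mul_comm _ _
    rw [this, hJ, hxval, mul_pow]
  · -- y not summable, so c = 0
    have hc : c = 0 := by
      have h0 : ∑' i, y i = 0 := tsum_eq_zero_of_not_summable hysum
      have : c ^ 2 = 0 := by rw [← hJ]; exact h0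
      exact pow_eq_zero_iff (two_ne_zero) |>.mp this
    rw [hc, zero_mul]
    simp only [ne_eq, OfNat.ofNat_ne_zero, not_false_eq_true, zero_pow]
    have hzero : ∑' p : ℕ × (ℕ × ℕ), x p.2 * y p.1 = 0 := by
      by_cases hfam : Summable (fun p : ℕ × (ℕ × ℕ) => x p.2 * y p.1)
      · have hall : ∀ p : ℕ × (ℕ × ℕ), x p.2 * y p.1 = 0 := by
          intro p
          by_cases hq : x p.2 = 0
          · rw [hq, zero_mul]
          · exfalso
            apply hysum
            have hcol : Summable (fun i => x p.2 * y i) :=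
              hfam.comp_injective (i := fun i : ℕ => (i, p.2)) (fun a b h => congrArg Prod.fst h)
            have := hcol.mul_left (x p.2)⁻¹
            simpa [hq, mul_assoc, inv_mul_cancel_left₀] using this
        simp [hall]
      · exact tsum_eq_zero_of_not_summable hfam
    rw [hzero]
end

section
/- Let 0 < α < β ≤ 1, u ∈ C_{β,∼}([0,T]; V) and 0 ≤ s < r ≤ T. Then the fractional derivative D^α_{s+}u[r] = (1/Γ(1-α))( u(r)/(r-s)^α + α ∫_s^r (u(r)-u(q))/(r-q)^{1+α} dq ) is well defined and satisfies |D^α_{s+}u[r]| ≤ c ‖u‖_{β,∼} (r-s)^{-α} for a constant c depending only on α, β, T. -/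
open MeasureTheory Set Real

/-- For 0 < α < β ≤ 1, u ∈ C_{β,∼}([0,T];V) (with K bounding both the sup norm and the weighted
Hölder seminorm) and 0 ≤ s < r ≤ T, the fractional derivative
D^α_{s+}u[r] = (1/Γ(1-α))( u(r)/(r-s)^α + α ∫_s^r (u(r)-u(q))/(r-q)^{1+α} dq )
is well defined and |D^α_{s+}u[r]| ≤ c K (r-s)^{-α}, with c depending only on α, β, T. -/
theorem stmt_16 (α β T : ℝ) (hα0 : 0 < α) (hαβ : α < β) (hβ1 : β ≤ 1) (hT : 0 < T)
    {V : Type*} [NormedAddCommGroup V] [NormedSpace ℝ V] [CompleteSpace V] :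
    ∃ c : ℝ, 0 < c ∧ ∀ (u : ℝ → V) (K : ℝ), ContinuousOn u (Set.Icc 0 T) →
      (∀ t ∈ Set.Icc (0:ℝ) T, ‖u t‖ ≤ K) →
      (∀ s t : ℝ, 0 < s → s < t → t ≤ T → s ^ β * ‖u t - u s‖ ≤ K * (t - s) ^ β) →
      ∀ s r : ℝ, 0 ≤ s → s < r → r ≤ T →
        IntervalIntegrable (fun q => ((r - q) ^ (-(1 + α))) • (u r - u q))
          MeasureTheory.volume s r ∧
        ‖(1 / Real.Gamma (1 - α)) •
            (((r - s) ^ (-α)) • u r + α • ∫ q in s..r, ((r - q) ^ (-(1 + α))) • (u r - u q))‖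
          ≤ c * K * (r - s) ^ (-α) := by
  have h1α : (0:ℝ) < 1 - α := by linarith
  have hΓ : 0 < Real.Gamma (1 - α) := Real.Gamma_pos_of_pos h1α
  have hβα : (0:ℝ) < β - α := by linarith
  have h2α : (0:ℝ) < 2 ^ α := Real.rpow_pos_of_pos two_pos α
  refine ⟨(1 / Real.Gamma (1 - α)) * (1 + 2 ^ α * (2 + α / (β - α))), by positivity, ?_⟩
  intro u K hu hKsup hKhol s r hs0 hsr hrT
  have hr0 : 0 < r := lt_of_le_of_lt hs0 hsr
  have hr2 : (0:ℝ) < r / 2 := by linarith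
  have hK0 : 0 ≤ K := le_trans (norm_nonneg _) (hKsup r ⟨hr0.le, hrT⟩)
  set m := max s (r / 2) with hm
  have hsm : s ≤ m := le_max_left _ _
  have hr2m : r / 2 ≤ m := le_max_right _ _
  have hmr : m < r := max_lt hsr (by linarith)
  have hm0 : 0 < m := lt_of_lt_of_le hr2 hr2m
  have hrm2 : r - m ≤ r / 2 := by
    have := hr2m; linarith
  set f : ℝ → V := fun q => ((r - q) ^ (-(1 + α))) • (u r - u q) with hfdef
  -- continuity of f away from r
  have hsubIccT : Set.Icc s m ⊆ Set.Icc 0 T := fun x hx =>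
    ⟨le_trans hs0 hx.1, le_trans hx.2 (le_trans hmr.le hrT)⟩
  have hcont : ContinuousOn f (Set.Icc s m) := by
    apply ContinuousOn.smul
    · apply ContinuousOn.rpow_const (continuous_const.sub continuous_id).continuousOn
      intro x hx
      left
      have : x ≤ m := hx.2
      have : r - x > 0 := by linarith
      exact ne_of_gt this
    · exact continuousOn_const.sub (hu.mono hsubIccT)
  have I1 : IntervalIntegrable f MeasureTheory.volume s m := by
    apply ContinuousOn.intervalIntegrable
    rwa [Set.uIcc_of_le hsm]
  -- measurability of f on (m, r]
  have hmeasf : AEStronglyMeasurable f (volume.restrict (Set.uIoc m r)) := by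
    rw [Set.uIoc_of_le hmr.le,
      Measure.restrict_congr_set (MeasureTheory.Ioo_ae_eq_Ioc (a := m) (b := r)).symm]
    have hsub2 : Set.Ioo m r ⊆ Set.Icc 0 T := fun x hx =>
      ⟨le_trans hm0.le hx.1.le, le_trans hx.2.le hrT⟩
    apply ContinuousOn.aestronglyMeasurable _ measurableSet_Ioo
    apply ContinuousOn.smul
    · apply ContinuousOn.rpow_const (continuous_const.sub continuous_id).continuousOn
      intro x hx
      left
      have : r - x > 0 := by linarith [hx.2]
      exact ne_of_gt this
    · exact continuousOn_const.sub (hu.mono hsub2)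
  -- pointwise bound on (m, r]
  have hbound2 : ∀ q ∈ Set.Ioc m r,
      ‖f q‖ ≤ K * (r / 2) ^ (-β) * (r - q) ^ (β - (1 + α)) := by
    intro q hq
    have hq1 : r / 2 ≤ q := le_trans hr2m hq.1.le
    have h0q : 0 < q := lt_of_lt_of_le hr2 hq1
    rcases eq_or_lt_of_le hq.2 with hqr | hqr
    · have : f q = 0 := by
        simp [hfdef, hqr, Real.zero_rpow (show -(1+α) ≠ 0 by intro h; linarith)]
      rw [this]
      simp only [norm_zero]
      exact mul_nonneg (by positivity) (Real.rpow_nonneg (by linarith [hq.2]) _)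
    have hrq : (0:ℝ) < r - q := by linarith
    have hH := hKhol q r h0q hqr hrT
    have hqβ : (0:ℝ) < q ^ β := Real.rpow_pos_of_pos h0q β
    have hr2β : (0:ℝ) < (r/2) ^ β := Real.rpow_pos_of_pos hr2 β
    have hU : ‖u r - u q‖ ≤ K * (r - q) ^ β / q ^ β := by
      rw [le_div_iff₀ hqβ]
      nlinarith [hH]
    have hU2 : ‖u r - u q‖ ≤ K * (r - q) ^ β / (r/2) ^ β := by
      refine le_trans hU ?_
      apply div_le_div_of_nonneg_left _ hr2β (Real.rpow_le_rpow hr2.le hq1 (by linarith))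
      positivity
    have hA : (0:ℝ) ≤ (r - q) ^ (-(1 + α)) := Real.rpow_nonneg hrq.le _
    have hnorm : ‖f q‖ = (r - q) ^ (-(1 + α)) * ‖u r - u q‖ := by
      rw [hfdef]
      simp only [norm_smul, Real.norm_eq_abs, abs_of_nonneg hA]
    rw [hnorm]
    have e1 : (r - q) ^ (-(1 + α)) * (r - q) ^ β = (r - q) ^ (β - (1 + α)) := by
      rw [← Real.rpow_add hrq]; ring_nf
    have e2 : ((r/2) ^ β)⁻¹ = (r/2) ^ (-β) := (Real.rpow_neg hr2.le β).symm
    calc (r - q) ^ (-(1 + α)) * ‖u r - u q‖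
        ≤ (r - q) ^ (-(1 + α)) * (K * (r - q) ^ β / (r/2) ^ β) :=
          mul_le_mul_of_nonneg_left hU2 hA
      _ = K * (r / 2) ^ (-β) * (r - q) ^ (β - (1 + α)) := by
          rw [← e1, ← e2]; ring
  -- integrability of the dominating function on [m, r]
  have hg2base : IntervalIntegrable (fun x : ℝ => x ^ (β - (1 + α))) volume (r - m) (r - r) :=
    intervalIntegral.intervalIntegrable_rpow' (by linarith)
  have hg2rpow : IntervalIntegrable (fun q : ℝ => (r - q) ^ (β - (1 + α))) volume m r := by
    have := hg2base.comp_sub_left r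
    simpa using this
  have hg2int : IntervalIntegrable (fun q : ℝ => K * (r / 2) ^ (-β) * (r - q) ^ (β - (1 + α)))
      volume m r := hg2rpow.const_mul _
  have hae2 : ∀ᵐ x ∂(volume.restrict (Set.uIoc m r)),
      ‖f x‖ ≤ K * (r / 2) ^ (-β) * (r - x) ^ (β - (1 + α)) := by
    rw [Set.uIoc_of_le hmr.le]
    exact (ae_restrict_iff' measurableSet_Ioc).mpr (ae_of_all _ hbound2)
  have I2 : IntervalIntegrable f volume m r := hg2int.mono_fun' hmeasf hae2
  have Ifull : IntervalIntegrable f volume s r := I1.trans I2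
  refine ⟨Ifull, ?_⟩
  -- value of ∫ (r-q)^(β-(1+α)) on m..r
  have hval2 : (∫ q in m..r, (r - q) ^ (β - (1 + α))) = (r - m) ^ (β - α) / (β - α) := by
    have hcomp := intervalIntegral.integral_comp_sub_left (a := m) (b := r)
      (fun x : ℝ => x ^ (β - (1 + α))) r
    rw [hcomp]
    rw [integral_rpow (Or.inl (by linarith))]
    have h1 : β - (1 + α) + 1 = β - α := by ring
    rw [h1]
    simp [Real.zero_rpow (ne_of_gt hβα)]
  -- bound on the second piece
  have hInt2 : ‖∫ q in m..r, f q‖ ≤ K * (r / 2) ^ (-β) * ((r / 2) ^ (β - α) / (β - α)) := by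
    refine le_trans (intervalIntegral.norm_integral_le_abs_of_norm_le hae2 hg2int) ?_
    rw [intervalIntegral.integral_const_mul, hval2]
    have hrmβα : (r - m) ^ (β - α) ≤ (r / 2) ^ (β - α) :=
      Real.rpow_le_rpow (by linarith) hrm2 (by linarith)
    have hnn : (0:ℝ) ≤ K * (r / 2) ^ (-β) * ((r - m) ^ (β - α) / (β - α)) :=
      mul_nonneg (by positivity) (div_nonneg (Real.rpow_nonneg (by linarith) _) hβα.le)
    rw [abs_of_nonneg hnn]
    gcongr
  -- bound on the first piece
  have hInt1 : ‖∫ q in s..m, f q‖ ≤ 2 * K * (r / 2) ^ (-α) / α := by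
    rcases le_or_gt s (r / 2) with hc | hc
    · have hmeq : m = r / 2 := max_eq_right hc
      -- pointwise bound by the sup norm
      have hbound1 : ∀ q ∈ Set.Ioc s m, ‖f q‖ ≤ 2 * K * (r - q) ^ (-(1 + α)) := by
        intro q hq
        have hq0 : 0 ≤ q := le_trans hs0 hq.1.le
        have hqT : q ≤ T := le_trans (hq.2.trans hmr.le) hrT
        have hrq : (0:ℝ) < r - q := by linarith [hq.2, hmr]
        have hA : (0:ℝ) ≤ (r - q) ^ (-(1 + α)) := Real.rpow_nonneg hrq.le _
        have h2K : ‖u r - u q‖ ≤ 2 * K := by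
          calc ‖u r - u q‖ ≤ ‖u r‖ + ‖u q‖ := norm_sub_le _ _
            _ ≤ K + K := add_le_add (hKsup r ⟨hr0.le, hrT⟩) (hKsup q ⟨hq0, hqT⟩)
            _ = 2 * K := by ring
        have hnorm : ‖f q‖ = (r - q) ^ (-(1 + α)) * ‖u r - u q‖ := by
          rw [hfdef]
          simp only [norm_smul, Real.norm_eq_abs, abs_of_nonneg hA]
        rw [hnorm]
        calc (r - q) ^ (-(1 + α)) * ‖u r - u q‖
            ≤ (r - q) ^ (-(1 + α)) * (2 * K) := mul_le_mul_of_nonneg_left h2K hA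
          _ = 2 * K * (r - q) ^ (-(1 + α)) := by ring
      have hg1cont : ContinuousOn (fun q : ℝ => 2 * K * (r - q) ^ (-(1 + α))) (Set.Icc s m) := by
        apply ContinuousOn.mul continuousOn_const
        apply ContinuousOn.rpow_const (continuous_const.sub continuous_id).continuousOn
        intro x hx
        left
        have : x ≤ m := hx.2
        have : r - x > 0 := by linarith
        exact ne_of_gt this
      have hg1int : IntervalIntegrable (fun q : ℝ => 2 * K * (r - q) ^ (-(1 + α))) volume s m := by
        apply ContinuousOn.intervalIntegrable
        rwa [Set.uIcc_of_le hsm]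
      have hae1 : ∀ᵐ x ∂(volume.restrict (Set.uIoc s m)),
          ‖f x‖ ≤ 2 * K * (r - x) ^ (-(1 + α)) := by
        rw [Set.uIoc_of_le hsm]
        exact (ae_restrict_iff' measurableSet_Ioc).mpr (ae_of_all _ hbound1)
      refine le_trans (intervalIntegral.norm_integral_le_abs_of_norm_le hae1 hg1int) ?_
      have hval1 : (∫ q in s..m, (r - q) ^ (-(1 + α)))
          = ((r - m) ^ (-α) - (r - s) ^ (-α)) / α := by
        have hcomp := intervalIntegral.integral_comp_sub_left (a := s) (b := m)
          (fun x : ℝ => x ^ (-(1 + α))) r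
        rw [hcomp]
        have hnotmem : (0:ℝ) ∉ Set.uIcc (r - m) (r - s) := by
          rw [Set.uIcc_of_le (by linarith : r - m ≤ r - s)]
          intro h
          have := h.1
          linarith [hmr]
        rw [integral_rpow (Or.inr ⟨show -(1 + α) ≠ -1 by intro h; linarith, hnotmem⟩)]
        have h1 : -(1 + α) + 1 = -α := by ring
        rw [h1, div_neg, ← neg_div, neg_sub]
      rw [intervalIntegral.integral_const_mul, hval1]
      have hrs0 : (0:ℝ) ≤ (r - s) ^ (-α) := Real.rpow_nonneg (by linarith) _
      have hrmeq : r - m = r / 2 := by rw [hmeq]; ring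
      rw [hrmeq]
      have hnn : (0:ℝ) ≤ 2 * K * (((r/2) ^ (-α) - (r - s) ^ (-α)) / α) := by
        have hle : (r - s) ^ (-α) ≤ (r/2) ^ (-α) := by
          apply Real.rpow_le_rpow_of_nonpos hr2 (by linarith [hc]) (by linarith)
        have : (0:ℝ) ≤ ((r/2) ^ (-α) - (r - s) ^ (-α)) / α := by
          apply div_nonneg (by linarith) hα0.le
        positivity
      rw [abs_of_nonneg hnn]
      calc 2 * K * (((r/2) ^ (-α) - (r - s) ^ (-α)) / α)
          = (2 * K * ((r/2) ^ (-α) - (r - s) ^ (-α))) / α := by ring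
        _ ≤ (2 * K * ((r/2) ^ (-α))) / α := by
            gcongr
            nlinarith [hrs0]
        _ = 2 * K * (r / 2) ^ (-α) / α := by ring
    · have hmeq : m = s := max_eq_left hc.le
      rw [hmeq, intervalIntegral.integral_same]
      simp only [norm_zero]
      positivity
  -- assemble
  have hsplit : (∫ q in s..r, f q) = (∫ q in s..m, f q) + ∫ q in m..r, f q :=
    (intervalIntegral.integral_add_adjacent_intervals I1 I2).symm
  have hrs : (0:ℝ) < r - s := by linarith
  have hrsα : (0:ℝ) < (r - s) ^ (-α) := Real.rpow_pos_of_pos hrs _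
  have hQ : (r / 2) ^ (-β) * (r / 2) ^ (β - α) = (r / 2) ^ (-α) := by
    rw [← Real.rpow_add hr2]; ring_nf
  have hQle : (r / 2) ^ (-α) ≤ 2 ^ α * (r - s) ^ (-α) := by
    have h1 : (r / 2) ^ (-α) = 2 ^ α * r ^ (-α) := by
      rw [div_eq_mul_inv, Real.mul_rpow hr0.le (by norm_num),
        Real.inv_rpow (by norm_num : (0:ℝ) ≤ 2), ← Real.rpow_neg (by norm_num : (0:ℝ) ≤ 2)]
      ring_nf
    rw [h1]
    have h2 : r ^ (-α) ≤ (r - s) ^ (-α) :=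
      Real.rpow_le_rpow_of_nonpos hrs (by linarith) (by linarith)
    exact mul_le_mul_of_nonneg_left h2 h2α.le
  have hW : ‖((r - s) ^ (-α)) • u r + α • ∫ q in s..r, f q‖
      ≤ (r - s) ^ (-α) * K + α * (‖∫ q in s..m, f q‖ + ‖∫ q in m..r, f q‖) := by
    refine le_trans (norm_add_le _ _) ?_
    apply add_le_add
    · rw [norm_smul, Real.norm_eq_abs, abs_of_nonneg hrsα.le]
      exact mul_le_mul_of_nonneg_left (hKsup r ⟨hr0.le, hrT⟩) hrsα.le
    · rw [norm_smul, Real.norm_eq_abs, abs_of_nonneg hα0.le, hsplit]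
      exact mul_le_mul_of_nonneg_left (norm_add_le _ _) hα0.le
  rw [norm_smul, Real.norm_eq_abs, abs_of_nonneg (by positivity : (0:ℝ) ≤ 1 / Real.Gamma (1 - α))]
  have hfinal : ‖((r - s) ^ (-α)) • u r + α • ∫ q in s..r, f q‖
      ≤ (1 + 2 ^ α * (2 + α / (β - α))) * K * (r - s) ^ (-α) := by
    refine le_trans hW ?_
    have hB1 := hInt1
    have hB2 : ‖∫ q in m..r, f q‖ ≤ K * (r / 2) ^ (-α) / (β - α) := by
      refine le_trans hInt2 (le_of_eq ?_)
      rw [← hQ]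
      ring
    have hQ0 : (0:ℝ) ≤ (r / 2) ^ (-α) := Real.rpow_nonneg hr2.le _
    have step : α * (‖∫ q in s..m, f q‖ + ‖∫ q in m..r, f q‖)
        ≤ 2 * K * (r / 2) ^ (-α) + α / (β - α) * (K * (r / 2) ^ (-α)) := by
      have h1 : α * ‖∫ q in s..m, f q‖ ≤ 2 * K * (r / 2) ^ (-α) := by
        have := mul_le_mul_of_nonneg_left hB1 hα0.le
        calc α * ‖∫ q in s..m, f q‖ ≤ α * (2 * K * (r / 2) ^ (-α) / α) := this
          _ = 2 * K * (r / 2) ^ (-α) := by field_simp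
      have h2 : α * ‖∫ q in m..r, f q‖ ≤ α / (β - α) * (K * (r / 2) ^ (-α)) := by
        have := mul_le_mul_of_nonneg_left hB2 hα0.le
        calc α * ‖∫ q in m..r, f q‖ ≤ α * (K * (r / 2) ^ (-α) / (β - α)) := this
          _ = α / (β - α) * (K * (r / 2) ^ (-α)) := by field_simp; try ring
      calc α * (‖∫ q in s..m, f q‖ + ‖∫ q in m..r, f q‖)
          = α * ‖∫ q in s..m, f q‖ + α * ‖∫ q in m..r, f q‖ := by ring
        _ ≤ _ := add_le_add h1 h2
    have hdivnn : (0:ℝ) ≤ α / (β - α) := by positivity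
    have hQK : K * (r / 2) ^ (-α) ≤ K * (2 ^ α * (r - s) ^ (-α)) :=
      mul_le_mul_of_nonneg_left hQle hK0
    have h3 : α / (β - α) * (K * (r / 2) ^ (-α))
        ≤ α / (β - α) * (K * (2 ^ α * (r - s) ^ (-α))) :=
      mul_le_mul_of_nonneg_left hQK hdivnn
    calc (r - s) ^ (-α) * K + α * (‖∫ q in s..m, f q‖ + ‖∫ q in m..r, f q‖)
        ≤ (r - s) ^ (-α) * K
          + (2 * K * (r / 2) ^ (-α) + α / (β - α) * (K * (r / 2) ^ (-α))) := by
          linarith [step]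
      _ ≤ (r - s) ^ (-α) * K
          + (2 * (K * (2 ^ α * (r - s) ^ (-α))) + α / (β - α) * (K * (2 ^ α * (r - s) ^ (-α)))) := by
          linarith [hQK, h3]
      _ = (1 + 2 ^ α * (2 + α / (β - α))) * K * (r - s) ^ (-α) := by ring
  calc (1 / Real.Gamma (1 - α)) * ‖((r - s) ^ (-α)) • u r + α • ∫ q in s..r, f q‖
      ≤ (1 / Real.Gamma (1 - α)) * ((1 + 2 ^ α * (2 + α / (β - α))) * K * (r - s) ^ (-α)) :=
        mul_le_mul_of_nonneg_left hfinal (by positivity)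
    _ = 1 / Real.Gamma (1 - α) * (1 + 2 ^ α * (2 + α / (β - α))) * K * (r - s) ^ (-α) := by ring
end

section
/- Let 1/3 < β < β' < 1/2, α with β < α < 2β, T > 0, u ∈ C_{β,∼}([0,T]; V), and G : V → L₂(V, V̂) twice Fréchet differentiable with ‖DG‖ ≤ c_{DG}, ‖D²G‖ ≤ c_{D²G} and c_G = ‖G(0)‖. Then the compensated fractional derivative D̂^α_{s+}G(u(·))[r] = (1/Γ(1-α))( G(u(r))/(r-s)^α + α∫_s^r (G(u(r)) - G(u(q)) - DG(u(q))(u(r)-u(q)))/(r-q)^{1+α} dq ) satisfies ‖D̂^α_{s+}G(u(·))[r]‖_{L₂(V,V̂)} ≤ c (1 + ‖u‖²_{β,∼}) (r-s)^{-α} for all 0 ≤ s < r ≤ T, where c depends on α, β, T, c_G, c_{DG}, c_{D²G}. -/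
open Set MeasureTheory intervalIntegral

lemma lip_of_deriv_bound {V W : Type*} [NormedAddCommGroup V] [NormedSpace ℝ V]
    [NormedAddCommGroup W] [NormedSpace ℝ W]
    (G : V → W) (DG : V → V →L[ℝ] W) (c : ℝ)
    (hG : ∀ v, HasFDerivAt G (DG v) v) (hb : ∀ v, ‖DG v‖ ≤ c) (a b : V) :
    ‖G b - G a‖ ≤ c * ‖b - a‖ :=
  Convex.norm_image_sub_le_of_norm_hasFDerivWithin_le
    (fun v _ => (hG v).hasFDerivWithinAt) (fun v _ => hb v) convex_univ trivial trivial

lemma taylor_two {V W : Type*} [NormedAddCommGroup V] [NormedSpace ℝ V]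
    [NormedAddCommGroup W] [NormedSpace ℝ W]
    (G : V → W) (DG : V → V →L[ℝ] W) (D2G : V → V →L[ℝ] V →L[ℝ] W) (c2 : ℝ)
    (hG : ∀ v, HasFDerivAt G (DG v) v) (hDG : ∀ v, HasFDerivAt DG (D2G v) v)
    (h2 : ∀ v, ‖D2G v‖ ≤ c2) (a b : V) :
    ‖G b - G a - DG a (b - a)‖ ≤ c2 * ‖b - a‖ ^ 2 := by
  have hc2 : 0 ≤ c2 := le_trans (norm_nonneg (D2G a)) (h2 a)
  have hlip : ∀ x y : V, ‖DG y - DG x‖ ≤ c2 * ‖y - x‖ := fun x y =>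
    Convex.norm_image_sub_le_of_norm_hasFDerivWithin_le
      (fun v _ => (hDG v).hasFDerivWithinAt) (fun v _ => h2 v) convex_univ trivial trivial
  have key := (convex_closedBall a ‖b - a‖).norm_image_sub_le_of_norm_hasFDerivWithin_le'
    (f := G) (f' := DG) (φ := DG a) (C := c2 * ‖b - a‖) (x := a) (y := b)
    (fun v _ => (hG v).hasFDerivWithinAt)
    (fun v hv => by
      have h1 := hlip a v
      have h2' : ‖v - a‖ ≤ ‖b - a‖ := by
        simpa [dist_eq_norm] using Metric.mem_closedBall.mp hv
      calc ‖DG v - DG a‖ ≤ c2 * ‖v - a‖ := h1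
        _ ≤ c2 * ‖b - a‖ := by nlinarith)
    (Metric.mem_closedBall_self (norm_nonneg _))
    (by simp [Metric.mem_closedBall, dist_eq_norm])
  calc ‖G b - G a - DG a (b - a)‖ ≤ (c2 * ‖b - a‖) * ‖b - a‖ := key
    _ = c2 * ‖b - a‖ ^ 2 := by ring

set_option maxHeartbeats 4000000 in
/-- Compensated fractional derivative estimate: for 1/3 < β < β' < 1/2, β < α < 2β, and
G : V → L₂(V,V̂) (codomain modeled as a Banach space W) twice differentiable with
‖G(0)‖ ≤ c_G, ‖DG‖ ≤ c_{DG}, ‖D²G‖ ≤ c_{D²G}, and u ∈ C_{β,∼}([0,T];V) with constant K,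
the compensated derivative D̂^α_{s+}G(u(·))[r] is well defined and bounded by
c (1 + K²)(r-s)^{-α}, with c depending only on α, β, T, c_G, c_{DG}, c_{D²G}. -/
theorem stmt_18 (β β' α T cG cDG cD2G : ℝ)
    (hβl : 1/3 < β) (hββ' : β < β') (hβ'u : β' < 1/2)
    (hαl : β < α) (hαu : α < 2 * β) (hT : 0 < T)
    (hcG : 0 ≤ cG) (hcDG : 0 ≤ cDG) (hcD2G : 0 ≤ cD2G)
    {V W : Type*} [NormedAddCommGroup V] [InnerProductSpace ℝ V] [CompleteSpace V]
    [NormedAddCommGroup W] [NormedSpace ℝ W] [CompleteSpace W] :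
    ∃ c : ℝ, 0 < c ∧ ∀ (G : V → W) (DG : V → V →L[ℝ] W) (D2G : V → V →L[ℝ] V →L[ℝ] W),
      (∀ v, HasFDerivAt G (DG v) v) → (∀ v, HasFDerivAt DG (D2G v) v) →
      ‖G 0‖ ≤ cG → (∀ v, ‖DG v‖ ≤ cDG) → (∀ v, ‖D2G v‖ ≤ cD2G) →
      ∀ (u : ℝ → V) (K : ℝ), ContinuousOn u (Set.Icc 0 T) →
        (∀ t ∈ Set.Icc (0:ℝ) T, ‖u t‖ ≤ K) →
        (∀ s t : ℝ, 0 < s → s < t → t ≤ T → s ^ β * ‖u t - u s‖ ≤ K * (t - s) ^ β) →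
        ∀ s r : ℝ, 0 ≤ s → s < r → r ≤ T →
          IntervalIntegrable
            (fun q => ((r - q) ^ (-(1 + α))) • (G (u r) - G (u q) - DG (u q) (u r - u q)))
            MeasureTheory.volume s r ∧
          ‖(1 / Real.Gamma (1 - α)) • (((r - s) ^ (-α)) • G (u r)
              + α • ∫ q in s..r,
                  ((r - q) ^ (-(1 + α))) • (G (u r) - G (u q) - DG (u q) (u r - u q)))‖
            ≤ c * (1 + K ^ 2) * (r - s) ^ (-α) := by
  have hβpos : 0 < β := by linarith
  have hαpos : 0 < α := by linarith
  have h2β1 : 2 * β < 1 := by linarith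
  have hα1 : α < 1 := by linarith
  have hΓpos : 0 < Real.Gamma (1 - α) := Real.Gamma_pos_of_pos (by linarith)
  have h2αpos : (0:ℝ) < 2 ^ α := Real.rpow_pos_of_pos (by norm_num) α
  set D : ℝ := 1 / (1 - 2*β) + 1 / (2*β - α) with hD
  have hDpos : 0 < D := by
    rw [hD]
    exact add_pos (div_pos one_pos (by linarith)) (div_pos one_pos (by linarith))
  set c0 : ℝ := (1 / Real.Gamma (1 - α)) * (cG + cDG + α * cD2G * 2 ^ α * D) + 1 with hc0
  have hc0pos : 0 < c0 := by
    have h1 : 0 ≤ 1 / Real.Gamma (1 - α) := by positivity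
    have h2 : 0 ≤ cG + cDG + α * cD2G * 2 ^ α * D := by positivity
    have h3 := mul_nonneg h1 h2
    rw [hc0]; linarith
  refine ⟨c0, hc0pos, ?_⟩
  intro Gf DG D2G hG hDG hG0 hDGb hD2Gb u K hu hKb hHold s r hs0 hsr hrT
  have hrpos : 0 < r := lt_of_le_of_lt hs0 hsr
  have hK0 : 0 ≤ K := le_trans (norm_nonneg (u r)) (hKb r ⟨hrpos.le, hrT⟩)
  set m : ℝ := (s + r) / 2 with hm
  have hsm : s < m := by rw [hm]; linarith
  have hmr : m < r := by rw [hm]; linarith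
  set h : ℝ := (r - s) / 2 with hh
  have hhpos : 0 < h := by rw [hh]; linarith
  have hrm : r - m = h := by rw [hm, hh]; ring
  have hms : m - s = h := by rw [hm, hh]; ring
  set f : ℝ → W := fun q =>
    ((r - q) ^ (-(1 + α))) • (Gf (u r) - Gf (u q) - DG (u q) (u r - u q)) with hfdef
  -- squaring rpow
  have hsq2 : ∀ x : ℝ, 0 < x → ∀ e : ℝ, (x ^ e) ^ 2 = x ^ (2 * e) := by
    intro x hx e
    rw [sq, ← Real.rpow_add hx]
    congr 1; ring
  -- pointwise bound inside (s, r)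
  have hpt : ∀ q, s < q → q < r →
      ‖f q‖ ≤ cD2G * K ^ 2 * ((r - q) ^ (2 * β - 1 - α) * (q - s) ^ (-(2 * β))) := by
    intro q hsq hqr
    have hq0 : 0 < q := lt_of_le_of_lt hs0 hsq
    have hrq : 0 < r - q := by linarith
    have hqs : 0 < q - s := by linarith
    have hqβ : (0:ℝ) < q ^ β := Real.rpow_pos_of_pos hq0 β
    have hA : ‖u r - u q‖ ≤ K * (r - q) ^ β * q ^ (-β) := by
      have h1 := hHold q r hq0 hqr hrT
      have h3 : ‖u r - u q‖ ≤ K * (r - q) ^ β / q ^ β := by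
        rw [le_div_iff₀ hqβ]
        linarith [h1, mul_comm (q ^ β) ‖u r - u q‖]
      calc ‖u r - u q‖ ≤ K * (r - q) ^ β / q ^ β := h3
        _ = K * (r - q) ^ β * q ^ (-β) := by
            rw [Real.rpow_neg hq0.le]; ring
    have hexpand : (K * (r - q) ^ β * q ^ (-β)) ^ 2
        = K ^ 2 * ((r - q) ^ (2 * β) * q ^ (-(2 * β))) := by
      have h1 : ((r - q) ^ β) ^ 2 = (r - q) ^ (2 * β) := hsq2 _ hrq β
      have h2 : (q ^ (-β)) ^ 2 = q ^ (2 * -β) := hsq2 _ hq0 (-β)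
      calc (K * (r - q) ^ β * q ^ (-β)) ^ 2
          = K ^ 2 * (((r - q) ^ β) ^ 2 * (q ^ (-β)) ^ 2) := by ring
        _ = K ^ 2 * ((r - q) ^ (2 * β) * q ^ (-(2 * β))) := by
            rw [h1, h2]; norm_num
    have hR : ‖Gf (u r) - Gf (u q) - DG (u q) (u r - u q)‖
        ≤ cD2G * (K ^ 2 * ((r - q) ^ (2 * β) * q ^ (-(2 * β)))) := by
      calc ‖Gf (u r) - Gf (u q) - DG (u q) (u r - u q)‖
          ≤ cD2G * ‖u r - u q‖ ^ 2 := taylor_two Gf DG D2G cD2G hG hDG hD2Gb (u q) (u r)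
        _ ≤ cD2G * (K * (r - q) ^ β * q ^ (-β)) ^ 2 := by
            have := pow_le_pow_left₀ (norm_nonneg _) hA 2
            exact mul_le_mul_of_nonneg_left this hcD2G
        _ = cD2G * (K ^ 2 * ((r - q) ^ (2 * β) * q ^ (-(2 * β)))) := by rw [hexpand]
    have hnf : ‖f q‖ = (r - q) ^ (-(1 + α))
        * ‖Gf (u r) - Gf (u q) - DG (u q) (u r - u q)‖ := by
      rw [hfdef]
      rw [norm_smul, Real.norm_eq_abs, abs_of_nonneg (Real.rpow_nonneg hrq.le _)]
    have hexp : (r - q) ^ (-(1 + α)) * (r - q) ^ (2 * β) = (r - q) ^ (2 * β - 1 - α) := by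
      rw [← Real.rpow_add hrq]; congr 1; ring
    have hqmono : q ^ (-(2 * β)) ≤ (q - s) ^ (-(2 * β)) :=
      Real.rpow_le_rpow_of_nonpos hqs (by linarith) (by linarith)
    calc ‖f q‖ = (r - q) ^ (-(1 + α))
          * ‖Gf (u r) - Gf (u q) - DG (u q) (u r - u q)‖ := hnf
      _ ≤ (r - q) ^ (-(1 + α)) * (cD2G * (K ^ 2 * ((r - q) ^ (2 * β) * q ^ (-(2 * β))))) :=
          mul_le_mul_of_nonneg_left hR (Real.rpow_nonneg hrq.le _)
      _ = cD2G * K ^ 2 * (((r - q) ^ (-(1 + α)) * (r - q) ^ (2 * β)) * q ^ (-(2 * β))) := by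
          ring
      _ = cD2G * K ^ 2 * ((r - q) ^ (2 * β - 1 - α) * q ^ (-(2 * β))) := by rw [hexp]
      _ ≤ cD2G * K ^ 2 * ((r - q) ^ (2 * β - 1 - α) * (q - s) ^ (-(2 * β))) := by
          have h0 : (0:ℝ) ≤ (r - q) ^ (2 * β - 1 - α) := Real.rpow_nonneg hrq.le _
          exact mul_le_mul_of_nonneg_left
            (mul_le_mul_of_nonneg_left hqmono h0) (mul_nonneg hcD2G (sq_nonneg K))
  -- continuity on (s, r)
  have hGc : Continuous Gf := continuous_iff_continuousAt.mpr fun v => (hG v).continuousAt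
  have hDGc : Continuous DG := continuous_iff_continuousAt.mpr fun v => (hDG v).continuousAt
  have hcont : ContinuousOn f (Set.Ioo s r) := by
    have husub : Set.Ioo s r ⊆ Set.Icc 0 T := fun x hx =>
      ⟨le_trans hs0 hx.1.le, le_trans hx.2.le hrT⟩
    have huc : ContinuousOn u (Set.Ioo s r) := hu.mono husub
    have h1 : ContinuousOn (fun q : ℝ => (r - q) ^ (-(1 + α))) (Set.Ioo s r) := by
      apply ContinuousOn.rpow_const (by fun_prop)
      intro x hx
      exact Or.inl (show (0:ℝ) < r - x by linarith [hx.2]).ne'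
    exact h1.smul (((continuousOn_const).sub (hGc.comp_continuousOn huc)).sub
      (ContinuousOn.clm_apply (hDGc.comp_continuousOn huc) (continuousOn_const.sub huc)))
  -- integrable reference functions
  have hgl : IntervalIntegrable (fun q : ℝ => (q - s) ^ (-(2 * β))) volume s m := by
    have := (intervalIntegrable_rpow' (a := 0) (b := m - s)
      (by linarith : (-1:ℝ) < -(2 * β))).comp_sub_right s
    simpa using this
  have hgr : IntervalIntegrable (fun q : ℝ => (r - q) ^ (2 * β - 1 - α)) volume m r := by
    have := (intervalIntegrable_rpow' (a := 0) (b := r - m)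
      (by linarith : (-1:ℝ) < 2 * β - 1 - α)).comp_sub_left r
    simpa using this.symm
  -- measurability on the two halves
  have hmeasL : AEStronglyMeasurable f (volume.restrict (Set.uIoc s m)) := by
    rw [Set.uIoc_of_le hsm.le]
    exact (hcont.mono (fun x hx => ⟨hx.1, lt_of_le_of_lt hx.2 hmr⟩)).aestronglyMeasurable
      measurableSet_Ioc
  have hmeasR : AEStronglyMeasurable f (volume.restrict (Set.uIoc m r)) := by
    rw [Set.uIoc_of_le hmr.le, ← Measure.restrict_congr_set Ioo_ae_eq_Ioc]
    exact (hcont.mono (fun x hx => ⟨lt_trans hsm hx.1, hx.2⟩)).aestronglyMeasurable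
      measurableSet_Ioo
  -- dominating bounds on the halves
  have hboundL : ∀ q ∈ Set.Ioc s m,
      ‖f q‖ ≤ cD2G * K ^ 2 * h ^ (2 * β - 1 - α) * (q - s) ^ (-(2 * β)) := by
    intro q hq
    have hqr : q < r := lt_of_le_of_lt hq.2 hmr
    have h2 : (r - q) ^ (2 * β - 1 - α) ≤ h ^ (2 * β - 1 - α) :=
      Real.rpow_le_rpow_of_nonpos hhpos (by linarith [hq.2, hrm]) (by linarith)
    have h0 : (0:ℝ) ≤ (q - s) ^ (-(2 * β)) :=
      Real.rpow_nonneg (by linarith [hq.1]) _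
    calc ‖f q‖ ≤ cD2G * K ^ 2 * ((r - q) ^ (2 * β - 1 - α) * (q - s) ^ (-(2 * β))) :=
        hpt q hq.1 hqr
      _ ≤ cD2G * K ^ 2 * (h ^ (2 * β - 1 - α) * (q - s) ^ (-(2 * β))) :=
          mul_le_mul_of_nonneg_left (mul_le_mul_of_nonneg_right h2 h0)
            (mul_nonneg hcD2G (sq_nonneg K))
      _ = cD2G * K ^ 2 * h ^ (2 * β - 1 - α) * (q - s) ^ (-(2 * β)) := by ring
  have hboundR : ∀ q ∈ Set.Ioc m r,
      ‖f q‖ ≤ cD2G * K ^ 2 * h ^ (-(2 * β)) * (r - q) ^ (2 * β - 1 - α) := by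
    intro q hq
    rcases eq_or_lt_of_le hq.2 with hqr | hqr
    · have hf0 : f q = 0 := by
        rw [hfdef]
        simp only [hqr, sub_self]
        rw [Real.zero_rpow (by linarith : -(1 + α) ≠ 0), zero_smul]
      rw [hf0, norm_zero, hqr, sub_self,
        Real.zero_rpow (by linarith : 2 * β - 1 - α ≠ 0)]
      simp
    · have h2 : (q - s) ^ (-(2 * β)) ≤ h ^ (-(2 * β)) :=
        Real.rpow_le_rpow_of_nonpos hhpos (by linarith [hq.1, hms]) (by linarith)
      have h0 : (0:ℝ) ≤ (r - q) ^ (2 * β - 1 - α) :=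
        Real.rpow_nonneg (by linarith) _
      calc ‖f q‖ ≤ cD2G * K ^ 2 * ((r - q) ^ (2 * β - 1 - α) * (q - s) ^ (-(2 * β))) :=
          hpt q (lt_trans hsm hq.1) hqr
        _ ≤ cD2G * K ^ 2 * ((r - q) ^ (2 * β - 1 - α) * h ^ (-(2 * β))) :=
            mul_le_mul_of_nonneg_left (mul_le_mul_of_nonneg_left h2 h0)
              (mul_nonneg hcD2G (sq_nonneg K))
        _ = cD2G * K ^ 2 * h ^ (-(2 * β)) * (r - q) ^ (2 * β - 1 - α) := by ring
  -- integrability on the halves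
  have hglC : IntervalIntegrable
      (fun q : ℝ => cD2G * K ^ 2 * h ^ (2 * β - 1 - α) * (q - s) ^ (-(2 * β))) volume s m :=
    hgl.const_mul _
  have hgrC : IntervalIntegrable
      (fun q : ℝ => cD2G * K ^ 2 * h ^ (-(2 * β)) * (r - q) ^ (2 * β - 1 - α)) volume m r :=
    hgr.const_mul _
  have haeL : (fun q => ‖f q‖) ≤ᵐ[volume.restrict (Set.uIoc s m)]
      fun q : ℝ => cD2G * K ^ 2 * h ^ (2 * β - 1 - α) * (q - s) ^ (-(2 * β)) := by
    rw [Set.uIoc_of_le hsm.le]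
    exact (ae_restrict_iff' measurableSet_Ioc).mpr (ae_of_all _ hboundL)
  have haeR : (fun q => ‖f q‖) ≤ᵐ[volume.restrict (Set.uIoc m r)]
      fun q : ℝ => cD2G * K ^ 2 * h ^ (-(2 * β)) * (r - q) ^ (2 * β - 1 - α) := by
    rw [Set.uIoc_of_le hmr.le]
    exact (ae_restrict_iff' measurableSet_Ioc).mpr (ae_of_all _ hboundR)
  have hIL : IntervalIntegrable f volume s m := hglC.mono_fun' hmeasL haeL
  have hIR : IntervalIntegrable f volume m r := hgrC.mono_fun' hmeasR haeR
  have hIf : IntervalIntegrable f volume s r := hIL.trans hIR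
  refine ⟨hIf, ?_⟩
  -- compute the dominating integrals
  have hintL : (∫ q in s..m, (q - s) ^ (-(2 * β))) = h ^ (-(2 * β) + 1) / (-(2 * β) + 1) := by
    rw [intervalIntegral.integral_comp_sub_right (fun t : ℝ => t ^ (-(2 * β))) s]
    rw [integral_rpow (Or.inl (by linarith))]
    rw [sub_self, hms, Real.zero_rpow (by linarith : -(2 * β) + 1 ≠ 0)]
    ring
  have hintR : (∫ q in m..r, (r - q) ^ (2 * β - 1 - α))
      = h ^ (2 * β - 1 - α + 1) / (2 * β - 1 - α + 1) := by
    rw [intervalIntegral.integral_comp_sub_left (fun t : ℝ => t ^ (2 * β - 1 - α)) r]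
    rw [sub_self, hrm]
    rw [integral_rpow (Or.inl (by linarith))]
    rw [Real.zero_rpow (by linarith : 2 * β - 1 - α + 1 ≠ 0)]
    ring
  -- norms of the half integrals
  have hNL : ‖∫ q in s..m, f q‖
      ≤ cD2G * K ^ 2 * h ^ (2 * β - 1 - α) * (h ^ (-(2 * β) + 1) / (-(2 * β) + 1)) := by
    have hb := intervalIntegral.norm_integral_le_abs_of_norm_le haeL hglC
    rw [intervalIntegral.integral_const_mul, hintL] at hb
    rwa [abs_of_nonneg (mul_nonneg (mul_nonneg (mul_nonneg hcD2G (sq_nonneg K))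
      (Real.rpow_nonneg hhpos.le _))
      (div_nonneg (Real.rpow_nonneg hhpos.le _) (by linarith)))] at hb
  have hNR : ‖∫ q in m..r, f q‖
      ≤ cD2G * K ^ 2 * h ^ (-(2 * β)) * (h ^ (2 * β - 1 - α + 1) / (2 * β - 1 - α + 1)) := by
    have hb := intervalIntegral.norm_integral_le_abs_of_norm_le haeR hgrC
    rw [intervalIntegral.integral_const_mul, hintR] at hb
    rwa [abs_of_nonneg (mul_nonneg (mul_nonneg (mul_nonneg hcD2G (sq_nonneg K))
      (Real.rpow_nonneg hhpos.le _))
      (div_nonneg (Real.rpow_nonneg hhpos.le _) (by linarith)))] at hb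
  -- combine exponents of h
  have hcombL : h ^ (2 * β - 1 - α) * h ^ (-(2 * β) + 1) = h ^ (-α) := by
    rw [← Real.rpow_add hhpos]; congr 1; ring
  have hcombR : h ^ (-(2 * β)) * h ^ (2 * β - 1 - α + 1) = h ^ (-α) := by
    rw [← Real.rpow_add hhpos]; congr 1; ring
  have hInorm : ‖∫ q in s..r, f q‖ ≤ cD2G * K ^ 2 * D * h ^ (-α) := by
    have hsplit : (∫ q in s..r, f q) = (∫ q in s..m, f q) + ∫ q in m..r, f q :=
      (intervalIntegral.integral_add_adjacent_intervals hIL hIR).symm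
    have h1 : cD2G * K ^ 2 * h ^ (2 * β - 1 - α) * (h ^ (-(2 * β) + 1) / (-(2 * β) + 1))
        = cD2G * K ^ 2 * h ^ (-α) * (1 / (1 - 2 * β)) := by
      rw [← hcombL]; ring
    have h2 : cD2G * K ^ 2 * h ^ (-(2 * β)) * (h ^ (2 * β - 1 - α + 1) / (2 * β - 1 - α + 1))
        = cD2G * K ^ 2 * h ^ (-α) * (1 / (2 * β - α)) := by
      rw [← hcombR]; ring
    calc ‖∫ q in s..r, f q‖ = ‖(∫ q in s..m, f q) + ∫ q in m..r, f q‖ := by rw [hsplit]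
      _ ≤ ‖∫ q in s..m, f q‖ + ‖∫ q in m..r, f q‖ := norm_add_le _ _
      _ ≤ cD2G * K ^ 2 * h ^ (-α) * (1 / (1 - 2 * β))
            + cD2G * K ^ 2 * h ^ (-α) * (1 / (2 * β - α)) := by
          rw [← h1, ← h2]; exact add_le_add hNL hNR
      _ = cD2G * K ^ 2 * D * h ^ (-α) := by rw [hD]; ring
  have hGur : ‖Gf (u r)‖ ≤ cG + cDG * K := by
    have h1 := lip_of_deriv_bound Gf DG cDG hG hDGb 0 (u r)
    have h2 : ‖u r‖ ≤ K := hKb r ⟨hrpos.le, hrT⟩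
    have h3 : ‖Gf (u r)‖ ≤ ‖Gf 0‖ + ‖Gf (u r) - Gf 0‖ := norm_le_insert' _ _
    rw [sub_zero] at h1
    linarith [h3, h1, mul_le_mul_of_nonneg_left h2 hcDG]
  have hP : (0:ℝ) < (r - s) ^ (-α) := Real.rpow_pos_of_pos (by linarith) _
  have hhα : h ^ (-α) = 2 ^ α * (r - s) ^ (-α) := by
    rw [hh, Real.div_rpow (by linarith : (0:ℝ) ≤ r - s) (by norm_num : (0:ℝ) ≤ 2),
      Real.rpow_neg (by norm_num : (0:ℝ) ≤ 2), div_inv_eq_mul]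
    ring
  have hIα : ‖(α:ℝ) • (∫ q in s..r, f q)‖
      ≤ α * (cD2G * K ^ 2 * D * (2 ^ α * (r - s) ^ (-α))) := by
    rw [norm_smul, Real.norm_eq_abs, abs_of_pos hαpos, ← hhα]
    exact mul_le_mul_of_nonneg_left hInorm hαpos.le
  have hAn : ‖((r - s) ^ (-α)) • Gf (u r)‖ ≤ (r - s) ^ (-α) * (cG + cDG * K) := by
    rw [norm_smul, Real.norm_eq_abs, abs_of_pos hP]
    exact mul_le_mul_of_nonneg_left hGur hP.le
  have hK1 : K ≤ 1 + K ^ 2 := by nlinarith [sq_nonneg (K - 1)]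
  have hΓinv : 0 < 1 / Real.Gamma (1 - α) := by positivity
  rw [norm_smul, Real.norm_eq_abs, abs_of_pos hΓinv]
  have hsum : ‖((r - s) ^ (-α)) • Gf (u r) + α • (∫ q in s..r, f q)‖
      ≤ (r - s) ^ (-α) * (cG + cDG * K)
        + α * (cD2G * K ^ 2 * D * (2 ^ α * (r - s) ^ (-α))) :=
    le_trans (norm_add_le _ _) (add_le_add hAn hIα)
  have he1 : (0:ℝ) ≤ α * cD2G * 2 ^ α * D :=
    mul_nonneg (mul_nonneg (mul_nonneg hαpos.le hcD2G) h2αpos.le) hDpos.le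
  have hstep : cG + cDG * K + α * cD2G * 2 ^ α * D * K ^ 2
      ≤ (cG + cDG + α * cD2G * 2 ^ α * D) * (1 + K ^ 2) := by
    have e2 : (cG + cDG + α * cD2G * 2 ^ α * D) * (1 + K ^ 2)
        = cG + cDG + α * cD2G * 2 ^ α * D + cG * K ^ 2 + cDG * K ^ 2
          + α * cD2G * 2 ^ α * D * K ^ 2 := by ring
    have e3 : cDG * (1 + K ^ 2) = cDG + cDG * K ^ 2 := by ring
    linarith [mul_nonneg hcG (sq_nonneg K), mul_le_mul_of_nonneg_left hK1 hcDG]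
  calc 1 / Real.Gamma (1 - α) * ‖((r - s) ^ (-α)) • Gf (u r) + α • ∫ q in s..r, f q‖
      ≤ 1 / Real.Gamma (1 - α) * ((r - s) ^ (-α) * (cG + cDG * K)
          + α * (cD2G * K ^ 2 * D * (2 ^ α * (r - s) ^ (-α)))) :=
        mul_le_mul_of_nonneg_left hsum hΓinv.le
    _ = 1 / Real.Gamma (1 - α) * (cG + cDG * K + α * cD2G * 2 ^ α * D * K ^ 2)
          * (r - s) ^ (-α) := by ring
    _ ≤ 1 / Real.Gamma (1 - α) * ((cG + cDG + α * cD2G * 2 ^ α * D) * (1 + K ^ 2))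
          * (r - s) ^ (-α) :=
        mul_le_mul_of_nonneg_right (mul_le_mul_of_nonneg_left hstep hΓinv.le) hP.le
    _ ≤ c0 * (1 + K ^ 2) * (r - s) ^ (-α) := by
        rw [hc0]
        have hnn : (0:ℝ) ≤ (1 + K ^ 2) * (r - s) ^ (-α) := by positivity
        have e4 : (1 / Real.Gamma (1 - α) * (cG + cDG + α * cD2G * 2 ^ α * D) + 1)
              * (1 + K ^ 2) * (r - s) ^ (-α)
            = 1 / Real.Gamma (1 - α) * ((cG + cDG + α * cD2G * 2 ^ α * D) * (1 + K ^ 2))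
              * (r - s) ^ (-α) + (1 + K ^ 2) * (r - s) ^ (-α) := by ring
        linarith [hnn, e4]
end
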